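/- For four points P_1, P_2, P_3, P_4 in the plane such that P_4 lies in the interior of the triangle P_1P_2P_3, the point P_4 minimizes both the L1 median objective Σ_i ‖x - P_i‖ and the bivariate Oja objective Σ_{i<j} |[x, P_i, P_j]|. -/

import Mathlib

/-- 2×2 determinant of two planar vectors. -/
noncomputable def det2 (a b : EuclideanSpace ℝ (Fin 2)) : ℝ :=
  a 0 * b 1 - a 1 * b 0

/-- The bivariate Oja objective for four planar points: sum of triangle areas
over all pairs of data points. -/
noncomputable def ojaObj4 (P₁ P₂ P₃ P₄ y : EuclideanSpace ℝ (Fin 2)) : ℝ :=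
  (1 / 2) * (|det2 (P₁ - y) (P₂ - y)| + |det2 (P₁ - y) (P₃ - y)| + |det2 (P₁ - y) (P₄ - y)| +
    |det2 (P₂ - y) (P₃ - y)| + |det2 (P₂ - y) (P₄ - y)| + |det2 (P₃ - y) (P₄ - y)|)

namespace InteriorMedianAux

abbrev E2 := EuclideanSpace ℝ (Fin 2)

lemma sub_apply' (a b : E2) (i : Fin 2) : (a - b) i = a i - b i := rfl
lemma add_apply' (a b : E2) (i : Fin 2) : (a + b) i = a i + b i := rfl
lemma smul_apply' (r : ℝ) (a : E2) (i : Fin 2) : (r • a) i = r * a i := rfl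

lemma exists_combo (P₁ P₂ P₃ x : E2) (hx : x ∈ convexHull ℝ ({P₁,P₂,P₃} : Set E2)) :
    ∃ l1 l2 l3 : ℝ, 0 ≤ l1 ∧ 0 ≤ l2 ∧ 0 ≤ l3 ∧ l1+l2+l3 = 1 ∧ x = l1•P₁+l2•P₂+l3•P₃ := by
  rw [show ({P₁,P₂,P₃} : Set E2) = insert P₁ {P₂,P₃} from rfl,
    convexHull_insert ⟨P₂, by simp⟩, convexHull_pair] at hx
  rw [mem_convexJoin] at hx
  obtain ⟨a, ha, b, hb, hab⟩ := hx
  rw [Set.mem_singleton_iff] at ha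
  subst ha
  obtain ⟨u, v, hu, hv, huv, hb⟩ := hb
  obtain ⟨s, t, hs, ht, hst, hx⟩ := hab
  refine ⟨s, t*u, t*v, hs, by positivity, by positivity, by nlinarith, ?_⟩
  rw [← hx, ← hb]
  module

lemma nondeg (P₁ P₂ P₃ P₄ : E2)
    (h : P₄ ∈ interior (convexHull ℝ ({P₁,P₂,P₃} : Set E2))) :
    det2 (P₁ - P₃) (P₂ - P₃) ≠ 0 := by
  intro hS
  simp only [det2, sub_apply'] at hS
  obtain ⟨w0, w1, hw, h1, h2⟩ :
      ∃ w0 w1 : ℝ, (w0 ≠ 0 ∨ w1 ≠ 0) ∧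
        (P₁ 0 - P₃ 0) * w1 - (P₁ 1 - P₃ 1) * w0 = 0 ∧
        (P₂ 0 - P₃ 0) * w1 - (P₂ 1 - P₃ 1) * w0 = 0 := by
    by_cases hv1 : P₁ 0 - P₃ 0 = 0 ∧ P₁ 1 - P₃ 1 = 0
    · by_cases hv2 : P₂ 0 - P₃ 0 = 0 ∧ P₂ 1 - P₃ 1 = 0
      · exact ⟨1, 0, Or.inl one_ne_zero, by rw [hv1.1, hv1.2]; ring, by rw [hv2.1, hv2.2]; ring⟩
      · refine ⟨P₂ 0 - P₃ 0, P₂ 1 - P₃ 1, by tauto, ?_, by ring⟩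
        rw [hv1.1, hv1.2]; ring
    · refine ⟨P₁ 0 - P₃ 0, P₁ 1 - P₃ 1, by tauto, by ring, by linear_combination -hS⟩
  set C : Set E2 := {x | (x 0 - P₃ 0) * w1 - (x 1 - P₃ 1) * w0 = 0} with hC
  have hconv : Convex ℝ C := by
    intro x hx y hy s t hs ht hst
    simp only [hC, Set.mem_setOf_eq, add_apply', smul_apply'] at *
    linear_combination s * hx + t * hy + (P₃ 0 * w1 - P₃ 1 * w0) * hst
  have hsub : convexHull ℝ ({P₁,P₂,P₃} : Set E2) ⊆ C := by
    apply convexHull_min _ hconv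
    intro z hz
    rcases hz with rfl | rfl | rfl
    · exact h1
    · exact h2
    · simp [hC]
  rw [mem_interior_iff_mem_nhds, Metric.mem_nhds_iff] at h
  obtain ⟨ε, hε, hball⟩ := h
  set e : E2 := (WithLp.equiv 2 (Fin 2 → ℝ)).symm ![w1, -w0] with he
  have he0 : e 0 = w1 := rfl
  have he1 : e 1 = -w0 := rfl
  set δ : ℝ := ε / (‖e‖ + 1) with hδ
  have hδpos : 0 < δ := by positivity
  have hmem : P₄ + δ • e ∈ C := by
    apply hsub; apply hball
    simp only [Metric.mem_ball, dist_eq_norm, add_sub_cancel_left, norm_smul,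
      Real.norm_eq_abs, abs_of_pos hδpos]
    rw [hδ, div_mul_eq_mul_div, div_lt_iff₀ (by positivity)]
    nlinarith [norm_nonneg e]
  have hmem4 : P₄ ∈ C := hsub (hball (Metric.mem_ball_self hε))
  simp only [hC, Set.mem_setOf_eq, add_apply', smul_apply', he0, he1] at hmem hmem4
  have hz : δ * (w1 * w1 + w0 * w0) = 0 := by linear_combination hmem - hmem4
  have hzz : w1 * w1 + w0 * w0 = 0 := by
    rcases mul_eq_zero.mp hz with h | h
    · exact absurd h hδpos.ne'
    · exact h
  rcases hw with hw | hw <;>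
    nlinarith [mul_self_nonneg w0, mul_self_nonneg w1, mul_self_pos.mpr hw]

lemma lemA (a b c q : E2) (α β γ : ℝ) (hα : 0 ≤ α) (hβ : 0 ≤ β) (hγ : 0 ≤ γ)
    (hs : α + β + γ = 1) (hq : q = α • a + β • b + γ • c) :
    ‖q - b‖ + ‖q - c‖ ≤ ‖a - b‖ + ‖a - c‖ := by
  have hβ' : β = 1 - α - γ := by linarith
  subst hβ'
  have h1 : q - b = α • (a - b) + γ • (c - b) := by rw [hq]; module
  have h2 : q - c = α • (a - c) + (1 - α - γ) • (b - c) := by rw [hq]; module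
  have e1 : ‖q - b‖ ≤ α * ‖a - b‖ + γ * ‖c - b‖ := by
    rw [h1]
    calc ‖α • (a - b) + γ • (c - b)‖ ≤ ‖α • (a - b)‖ + ‖γ • (c - b)‖ := norm_add_le _ _
    _ = α * ‖a - b‖ + γ * ‖c - b‖ := by
        rw [norm_smul, norm_smul, Real.norm_eq_abs, Real.norm_eq_abs,
          abs_of_nonneg hα, abs_of_nonneg hγ]
  have e2 : ‖q - c‖ ≤ α * ‖a - c‖ + (1 - α - γ) * ‖b - c‖ := by
    rw [h2]
    calc ‖α • (a - c) + (1 - α - γ) • (b - c)‖ ≤ ‖α • (a - c)‖ + ‖(1 - α - γ) • (b - c)‖ :=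
        norm_add_le _ _
    _ = α * ‖a - c‖ + (1 - α - γ) * ‖b - c‖ := by
        rw [norm_smul, norm_smul, Real.norm_eq_abs, Real.norm_eq_abs,
          abs_of_nonneg hα, abs_of_nonneg hβ]
  have e3 : ‖c - b‖ = ‖b - c‖ := norm_sub_rev _ _
  have e4 : ‖b - c‖ ≤ ‖a - b‖ + ‖a - c‖ := by
    have := norm_add_le (b - a) (a - c)
    rw [sub_add_sub_cancel, norm_sub_rev b a] at this
    exact this
  nlinarith [mul_le_mul_of_nonneg_left e4 (by linarith : (0:ℝ) ≤ 1 - α), norm_nonneg (b - c)]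

lemma main_ineq (A B C q y : E2)
    (h : ∃ α β γ : ℝ, 0 ≤ α ∧ 0 ≤ β ∧ 0 ≤ γ ∧ α + β + γ = 1 ∧ q = α • y + β • A + γ • B) :
    ‖q - A‖ + ‖q - B‖ + ‖q - C‖ ≤ ‖y - A‖ + ‖y - B‖ + ‖y - C‖ + ‖y - q‖ := by
  obtain ⟨α, β, γ, hα, hβ, hγ, hs, hq⟩ := h
  have h1 : ‖q - A‖ + ‖q - B‖ ≤ ‖y - A‖ + ‖y - B‖ := lemA y A B q α β γ hα hβ hγ hs hq
  have h2 : ‖q - C‖ ≤ ‖y - q‖ + ‖y - C‖ := by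
    have := norm_add_le (q - y) (y - C)
    rw [sub_add_sub_cancel, norm_sub_rev q y] at this
    linarith
  linarith

lemma pick (l1 l2 l3 c1 c2 c3 : ℝ) (h1 : 0 ≤ l1) (h2 : 0 ≤ l2) (h3 : 0 ≤ l3)
    (hc : c1 + c2 + c3 = 1) :
    (0 < c1 ∧ l1*c2 ≤ l2*c1 ∧ l1*c3 ≤ l3*c1) ∨
    (0 < c2 ∧ l2*c1 ≤ l1*c2 ∧ l2*c3 ≤ l3*c2) ∨
    (0 < c3 ∧ l3*c1 ≤ l1*c3 ∧ l3*c2 ≤ l2*c3) := by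
  by_cases p1 : 0 < c1 <;> by_cases p2 : 0 < c2 <;> by_cases p3 : 0 < c3
  · rcases le_total (l1*c2) (l2*c1) with h12 | h12
    · rcases le_total (l1*c3) (l3*c1) with h13 | h13
      · exact Or.inl ⟨p1, h12, h13⟩
      · refine Or.inr (Or.inr ⟨p3, h13, ?_⟩)
        nlinarith [mul_le_mul_of_nonneg_right h13 p2.le, mul_le_mul_of_nonneg_right h12 p3.le]
    · rcases le_total (l2*c3) (l3*c2) with h23 | h23
      · exact Or.inr (Or.inl ⟨p2, h12, h23⟩)
      · refine Or.inr (Or.inr ⟨p3, ?_, h23⟩)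
        nlinarith [mul_le_mul_of_nonneg_right h23 p1.le, mul_le_mul_of_nonneg_right h12 p3.le]
  · rcases le_total (l1*c2) (l2*c1) with h12 | h12
    · exact Or.inl ⟨p1, h12, by nlinarith⟩
    · exact Or.inr (Or.inl ⟨p2, h12, by nlinarith⟩)
  · rcases le_total (l1*c3) (l3*c1) with h13 | h13
    · exact Or.inl ⟨p1, by nlinarith, h13⟩
    · exact Or.inr (Or.inr ⟨p3, h13, by nlinarith⟩)
  · exact Or.inl ⟨p1, by nlinarith, by nlinarith⟩
  · rcases le_total (l2*c3) (l3*c2) with h23 | h23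
    · exact Or.inr (Or.inl ⟨p2, by nlinarith, h23⟩)
    · exact Or.inr (Or.inr ⟨p3, by nlinarith, h23⟩)
  · exact Or.inr (Or.inl ⟨p2, by nlinarith, by nlinarith⟩)
  · exact Or.inr (Or.inr ⟨p3, by nlinarith, by nlinarith⟩)
  · exfalso; push_neg at p1 p2 p3; linarith

lemma assemble (A B C q y : E2) (lA lB lC cA cB cC : ℝ)
    (hlA : 0 ≤ lA) (hlB : 0 ≤ lB) (hlC : 0 ≤ lC) (hlsum : lA + lB + lC = 1)
    (hcsum : cA + cB + cC = 1)
    (hq : q = lA • A + lB • B + lC • C) (hy : y = cA • A + cB • B + cC • C)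
    (hcC : 0 < cC) (hA : lC * cA ≤ lA * cC) (hB : lC * cB ≤ lB * cC) :
    ∃ α β γ : ℝ, 0 ≤ α ∧ 0 ≤ β ∧ 0 ≤ γ ∧ α + β + γ = 1 ∧ q = α • y + β • A + γ • B := by
  refine ⟨lC / cC, lA - (lC / cC) * cA, lB - (lC / cC) * cB, div_nonneg hlC hcC.le, ?_, ?_, ?_, ?_⟩
  · rw [sub_nonneg, div_mul_eq_mul_div, div_le_iff₀ hcC]; linarith
  · rw [sub_nonneg, div_mul_eq_mul_div, div_le_iff₀ hcC]; linarith
  · have : lC / cC * cC = lC := div_mul_cancel₀ _ hcC.ne'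
    nlinarith [this]
  · rw [hq, hy]
    match_scalars <;> field_simp <;> ring

end InteriorMedianAux

open InteriorMedianAux in
/-- If P₄ lies in the interior of the triangle P₁P₂P₃, then P₄ minimizes both the
L¹ median objective and the bivariate Oja objective of the four points. -/
theorem interior_point_is_median
    (P₁ P₂ P₃ P₄ : EuclideanSpace ℝ (Fin 2))
    (h : P₄ ∈ interior (convexHull ℝ ({P₁, P₂, P₃} : Set (EuclideanSpace ℝ (Fin 2))))) :
    (∀ y : EuclideanSpace ℝ (Fin 2),
      ‖P₄ - P₁‖ + ‖P₄ - P₂‖ + ‖P₄ - P₃‖ + ‖P₄ - P₄‖ ≤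
      ‖y - P₁‖ + ‖y - P₂‖ + ‖y - P₃‖ + ‖y - P₄‖) ∧
    (∀ y : EuclideanSpace ℝ (Fin 2), ojaObj4 P₁ P₂ P₃ P₄ P₄ ≤ ojaObj4 P₁ P₂ P₃ P₄ y) := by
  obtain ⟨l1, l2, l3, hl1, hl2, hl3, hlsum, hq⟩ :=
    exists_combo P₁ P₂ P₃ P₄ (interior_subset h)
  have hS : det2 (P₁ - P₃) (P₂ - P₃) ≠ 0 := nondeg P₁ P₂ P₃ P₄ h
  have hSne : (P₁ 0 - P₃ 0) * (P₂ 1 - P₃ 1) - (P₁ 1 - P₃ 1) * (P₂ 0 - P₃ 0) ≠ 0 := by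
    simpa only [det2, sub_apply'] using hS
  have h44 : ‖P₄ - P₄‖ = (0:ℝ) := by simp
  constructor
  · intro y
    set c1 : ℝ := ((y 0 - P₃ 0) * (P₂ 1 - P₃ 1) - (y 1 - P₃ 1) * (P₂ 0 - P₃ 0)) /
      ((P₁ 0 - P₃ 0) * (P₂ 1 - P₃ 1) - (P₁ 1 - P₃ 1) * (P₂ 0 - P₃ 0)) with hc1
    set c2 : ℝ := ((P₁ 0 - P₃ 0) * (y 1 - P₃ 1) - (P₁ 1 - P₃ 1) * (y 0 - P₃ 0)) /
      ((P₁ 0 - P₃ 0) * (P₂ 1 - P₃ 1) - (P₁ 1 - P₃ 1) * (P₂ 0 - P₃ 0)) with hc2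
    set c3 : ℝ := 1 - c1 - c2 with hc3
    have hcsum : c1 + c2 + c3 = 1 := by rw [hc3]; ring
    have hy : y = c1 • P₁ + c2 • P₂ + c3 • P₃ := by
      ext i
      fin_cases i
      · show y 0 = c1 * P₁ 0 + c2 * P₂ 0 + c3 * P₃ 0
        rw [hc3, hc1, hc2, div_eq_mul_inv, div_eq_mul_inv]
        linear_combination (P₃ 0 - y 0) * mul_inv_cancel₀ hSne
      · show y 1 = c1 * P₁ 1 + c2 * P₂ 1 + c3 * P₃ 1
        rw [hc3, hc1, hc2, div_eq_mul_inv, div_eq_mul_inv]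
        linear_combination (P₃ 1 - y 1) * mul_inv_cancel₀ hSne
    rcases pick l1 l2 l3 c1 c2 c3 hl1 hl2 hl3 hcsum with ⟨hp, hA, hB⟩ | ⟨hp, hA, hB⟩ | ⟨hp, hA, hB⟩
    · -- k = 1 : pair (P₂, P₃)
      have hq' : P₄ = l2 • P₂ + l3 • P₃ + l1 • P₁ := by rw [hq]; module
      have hy' : y = c2 • P₂ + c3 • P₃ + c1 • P₁ := by rw [hy]; module
      have := main_ineq P₂ P₃ P₁ P₄ y
        (assemble P₂ P₃ P₁ P₄ y l2 l3 l1 c2 c3 c1 hl2 hl3 hl1 (by linarith) (by linarith)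
          hq' hy' hp hA hB)
      linarith
    · -- k = 2 : pair (P₁, P₃)
      have hq' : P₄ = l1 • P₁ + l3 • P₃ + l2 • P₂ := by rw [hq]; module
      have hy' : y = c1 • P₁ + c3 • P₃ + c2 • P₂ := by rw [hy]; module
      have := main_ineq P₁ P₃ P₂ P₄ y
        (assemble P₁ P₃ P₂ P₄ y l1 l3 l2 c1 c3 c2 hl1 hl3 hl2 (by linarith) (by linarith)
          hq' hy' hp hA hB)
      linarith
    · -- k = 3 : pair (P₁, P₂)
      have hy' : y = c1 • P₁ + c2 • P₂ + c3 • P₃ := hy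
      have := main_ineq P₁ P₂ P₃ P₄ y
        (assemble P₁ P₂ P₃ P₄ y l1 l2 l3 c1 c2 c3 hl1 hl2 hl3 hlsum hcsum hq hy' hp hA hB)
      linarith
  · intro y
    have hl3' : l3 = 1 - l1 - l2 := by linarith
    subst hl3'
    have hx0 : P₄ 0 = l1 * P₁ 0 + l2 * P₂ 0 + (1 - l1 - l2) * P₃ 0 := by rw [hq]; rfl
    have hx1 : P₄ 1 = l1 * P₁ 1 + l2 * P₂ 1 + (1 - l1 - l2) * P₃ 1 := by rw [hq]; rfl
    set S : ℝ := det2 (P₁ - P₃) (P₂ - P₃) with hSdef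
    have hd12 : det2 (P₁ - P₄) (P₂ - P₄) = (1 - l1 - l2) * S := by
      simp only [hSdef, det2, sub_apply']; rw [hx0, hx1]; ring
    have hd13 : det2 (P₁ - P₄) (P₃ - P₄) = -(l2 * S) := by
      simp only [hSdef, det2, sub_apply']; rw [hx0, hx1]; ring
    have hd23 : det2 (P₂ - P₄) (P₃ - P₄) = l1 * S := by
      simp only [hSdef, det2, sub_apply']; rw [hx0, hx1]; ring
    have hzero : ∀ a : EuclideanSpace ℝ (Fin 2), det2 a (P₄ - P₄) = 0 := by
      intro a; simp [det2, sub_apply']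
    have hojaP : ojaObj4 P₁ P₂ P₃ P₄ P₄ = (1/2) * |S| := by
      simp only [ojaObj4, hzero, abs_zero, add_zero, hd12, hd13, hd23, abs_neg, abs_mul,
        abs_of_nonneg hl1, abs_of_nonneg hl2, abs_of_nonneg hl3]
      ring
    have hiden : det2 (P₁ - y) (P₂ - y) - det2 (P₁ - y) (P₃ - y) + det2 (P₂ - y) (P₃ - y) = S := by
      simp only [hSdef, det2, sub_apply']; ring
    have habs : |S| ≤ |det2 (P₁ - y) (P₂ - y)| + |det2 (P₁ - y) (P₃ - y)| +
        |det2 (P₂ - y) (P₃ - y)| := by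
      rw [← hiden]
      calc |det2 (P₁ - y) (P₂ - y) - det2 (P₁ - y) (P₃ - y) + det2 (P₂ - y) (P₃ - y)|
          ≤ |det2 (P₁ - y) (P₂ - y) - det2 (P₁ - y) (P₃ - y)| + |det2 (P₂ - y) (P₃ - y)| :=
            abs_add_le _ _
        _ ≤ _ := by
            have := abs_sub (det2 (P₁ - y) (P₂ - y)) (det2 (P₁ - y) (P₃ - y))
            linarith
    rw [hojaP, ojaObj4]
    have n1 := abs_nonneg (det2 (P₁ - y) (P₄ - y))
    have n2 := abs_nonneg (det2 (P₂ - y) (P₄ - y))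
    have n3 := abs_nonneg (det2 (P₃ - y) (P₄ - y))
    linarith
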